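/- Let A, B ⊆ ℝ be Lebesgue-measurable sets, and let a be a Lebesgue density point of A and b a density point of B, with a, b > 0. Then there exist sequences of positive rationals (qₙ) and points aₙ ∈ A, bₙ ∈ B with aₙ → a and bₙ → b such that bₙ = qₙ · aₙ for all n. -/

import Mathlib

set_option maxHeartbeats 1000000
open MeasureTheory Filter Set Topology
open scoped ENNReal

/-- `x` is a Lebesgue density point of `T`. -/
def IsDensityPoint (T : Set ℝ) (x : ℝ) : Prop :=
  Tendsto (fun δ : ℝ => volume (T ∩ Ioo (x - δ / 2) (x + δ / 2)) / ENNReal.ofReal δ)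
    (𝓝[>] 0) (𝓝 1)

lemma density_est {T : Set ℝ} {x : ℝ} (h : IsDensityPoint T x) :
    ∃ δ₀ > 0, ∀ δ : ℝ, 0 < δ → δ < δ₀ →
      ENNReal.ofReal (7 / 8 * δ) ≤ volume (T ∩ Ioo (x - δ / 2) (x + δ / 2)) := by
  have hmem := h (Ioi_mem_nhds (show (7/8 : ℝ≥0∞) < 1 by rw [ENNReal.div_lt_iff (by norm_num) (by norm_num)]; norm_num))
  rw [mem_map, mem_nhdsGT_iff_exists_Ioo_subset] at hmem
  obtain ⟨u, hu, hsub⟩ := hmem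
  refine ⟨u, hu, fun δ hδ hδu => ?_⟩
  have := hsub ⟨hδ, hδu⟩
  simp only [mem_setOf_eq, mem_preimage, mem_Ioi] at this
  have h2 : (7/8 : ℝ≥0∞) * ENNReal.ofReal δ < volume (T ∩ Ioo (x - δ/2) (x + δ/2)) := by
    refine (ENNReal.lt_div_iff_mul_lt (Or.inl ?_) (Or.inl ?_)).mp this
    · simpa using hδ
    · exact ENNReal.ofReal_ne_top
  refine le_of_lt ?_
  calc ENNReal.ofReal (7/8 * δ) = (7/8 : ℝ≥0∞) * ENNReal.ofReal δ := by
        rw [ENNReal.ofReal_mul (by norm_num), ENNReal.ofReal_div_of_pos (by norm_num)]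
        norm_num
    _ < _ := h2

lemma nonempty_of_measure {S T I : Set ℝ} (hS : S ⊆ I) (hT : T ⊆ I)
    (hTm : MeasurableSet T) (h : volume I < volume S + volume T) :
    (S ∩ T).Nonempty := by
  by_contra hc
  rw [not_nonempty_iff_eq_empty] at hc
  have hd : Disjoint S T := disjoint_iff_inter_eq_empty.mpr hc
  have := measure_union hd hTm (μ := volume)
  have hle : volume (S ∪ T) ≤ volume I := measure_mono (union_subset hS hT)
  rw [this] at hle
  exact absurd (h.trans_le hle) (lt_irrefl _)

lemma key (A B : Set ℝ) (hA : MeasurableSet A) (hB : MeasurableSet B)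
    (a b : ℝ) (ha : 0 < a) (hb : 0 < b)
    (hda : IsDensityPoint A a) (hdb : IsDensityPoint B b) (ε : ℝ) (hε : 0 < ε) :
    ∃ q : ℚ, 0 < q ∧ ∃ x ∈ A, ∃ y ∈ B, |x - a| < ε ∧ |y - b| < ε ∧ y = (q : ℝ) * x := by
  obtain ⟨δA, hδA, hAe⟩ := density_est hda
  obtain ⟨δB, hδB, hBe⟩ := density_est hdb
  set δ : ℝ := min (min (δB / 2) (b * δA / (2 * a))) (min ε (b * ε / (2 * a))) with hδdef
  have hδ : 0 < δ := by positivity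
  have hδ1 : δ ≤ δB / 2 := le_trans (min_le_left _ _) (min_le_left _ _)
  have hδ2 : δ ≤ b * δA / (2 * a) := le_trans (min_le_left _ _) (min_le_right _ _)
  have hδ3 : δ ≤ ε := le_trans (min_le_right _ _) (min_le_left _ _)
  have hδ4 : δ ≤ b * ε / (2 * a) := le_trans (min_le_right _ _) (min_le_right _ _)
  -- choose rational q
  have hlo : max (b / (2 * a)) (b / a - δ / (8 * a)) < b / a := by
    apply max_lt
    · rw [div_lt_div_iff₀ (by positivity) ha]; nlinarith
    · nlinarith [div_pos hδ (by positivity : (0:ℝ) < 8 * a)]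
  obtain ⟨q, hq1, hq2⟩ := exists_rat_btwn hlo
  have hq1a : b / (2 * a) < (q : ℝ) := lt_of_le_of_lt (le_max_left _ _) hq1
  have hq1b : b / a - δ / (8 * a) < (q : ℝ) := lt_of_le_of_lt (le_max_right _ _) hq1
  have hr0 : (0 : ℝ) < (q : ℝ) := lt_trans (by positivity) hq1a
  have hq0 : 0 < q := by exact_mod_cast hr0
  set r : ℝ := (q : ℝ) with hrdef
  have hra : r * a < b := by rw [lt_div_iff₀ ha] at hq2; linarith
  have hra2 : b - δ / 8 < r * a := by
    have h := mul_lt_mul_of_pos_right hq1b ha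
    have e1 : (b / a - δ / (8 * a)) * a = b - δ / 8 := by field_simp
    rw [e1] at h; exact h
  have hrb : b / (2 * a) < r := hq1a
  have hrlb : b / 2 < r * a := by rw [div_lt_iff₀ (by positivity)] at hrb; nlinarith
  -- set up
  set δ' : ℝ := 3 * δ / (4 * r) with hδ'def
  have hδ' : 0 < δ' := by positivity
  have hδ'A : δ' < δA := by
    rw [hδ'def, div_lt_iff₀ (by positivity)]
    have h1 : b * δA / (2 * a) * (2 * a) = b * δA := by field_simp
    have h2 : δ * (2 * a) ≤ b * δA := by
      calc δ * (2 * a) ≤ b * δA / (2 * a) * (2 * a) := by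
            apply mul_le_mul_of_nonneg_right hδ2 (by positivity)
        _ = b * δA := h1
    nlinarith
  have hδB' : δ < δB := by linarith
  set I : Set ℝ := Ioo (b - δ / 2) (b + δ / 2) with hIdef
  set J : Set ℝ := Ioo (a - δ' / 2) (a + δ' / 2) with hJdef
  set T : Set ℝ := (fun y => r⁻¹ * y) ⁻¹' (A ∩ J) with hTdef
  have hTm : MeasurableSet T := (hA.inter measurableSet_Ioo).preimage (measurable_const_mul _)
  have hrδ' : r * δ' = 3 * δ / 4 := by rw [hδ'def]; field_simp
  have hTsub : T ⊆ I := by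
    intro y hy
    obtain ⟨-, hyJ⟩ := hy
    simp only [hJdef, mem_Ioo] at hyJ
    have e1 : r * (a - δ' / 2) < y := by
      have := mul_lt_mul_of_pos_left hyJ.1 hr0
      calc r * (a - δ'/2) < r * (r⁻¹ * y) := this
        _ = y := by field_simp
    have e2 : y < r * (a + δ' / 2) := by
      have := mul_lt_mul_of_pos_left hyJ.2 hr0
      calc y = r * (r⁻¹ * y) := by field_simp
        _ < r * (a + δ'/2) := this
    constructor <;> nlinarith
  -- measures
  have hvolT : volume T = ENNReal.ofReal r * volume (A ∩ J) := by
    rw [hTdef, Real.volume_preimage_mul_left (by positivity : r⁻¹ ≠ 0)]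
    rw [inv_inv, abs_of_pos hr0]
  have hAJ : ENNReal.ofReal (7 / 8 * δ') ≤ volume (A ∩ J) := hAe δ' hδ' hδ'A
  have hBI : ENNReal.ofReal (7 / 8 * δ) ≤ volume (B ∩ I) := hBe δ hδ hδB'
  have hvolT' : ENNReal.ofReal (21 / 32 * δ) ≤ volume T := by
    rw [hvolT]
    calc ENNReal.ofReal (21 / 32 * δ) = ENNReal.ofReal r * ENNReal.ofReal (7/8 * δ') := by
          rw [← ENNReal.ofReal_mul (le_of_lt hr0)]
          congr 1
          rw [hδ'def]; field_simp; ring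
      _ ≤ _ := mul_le_mul_right hAJ _
  have hvolI : volume I < volume T + volume (B ∩ I) := by
    have : volume I = ENNReal.ofReal δ := by
      rw [hIdef, Real.volume_Ioo]; congr 1; ring
    rw [this]
    calc ENNReal.ofReal δ < ENNReal.ofReal (21/32 * δ) + ENNReal.ofReal (7/8 * δ) := by
          rw [← ENNReal.ofReal_add (by positivity) (by positivity)]
          exact ENNReal.ofReal_lt_ofReal_iff_of_nonneg (le_of_lt hδ) |>.mpr (by nlinarith)
      _ ≤ _ := add_le_add hvolT' hBI
  obtain ⟨y, hyT, hyB, hyI⟩ := nonempty_of_measure hTsub (inter_subset_right) (hB.inter measurableSet_Ioo) hvolI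
  obtain ⟨hxA, hxJ⟩ := hyT
  refine ⟨q, hq0, r⁻¹ * y, hxA, y, hyB, ?_, ?_, by field_simp; rfl⟩
  · simp only [hJdef, mem_Ioo] at hxJ
    rw [abs_lt]
    have hδ'ε : δ' < ε := by
      rw [hδ'def, div_lt_iff₀ (by positivity)]
      have h2 : δ * (2 * a) ≤ b * ε := by
        rw [le_div_iff₀ (by positivity : (0:ℝ) < 2 * a)] at hδ4; linarith
      have h3 : b < r * (2 * a) := by
        rw [div_lt_iff₀ (by positivity : (0:ℝ) < 2 * a)] at hrb; linarith
      nlinarith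
    constructor <;> nlinarith [hxJ.1, hxJ.2]
  · simp only [hIdef, mem_Ioo] at hyI
    rw [abs_lt]
    constructor <;> nlinarith [hyI.1, hyI.2]

theorem stmt_0 (A B : Set ℝ) (hA : MeasurableSet A) (hB : MeasurableSet B)
    (a b : ℝ) (ha : 0 < a) (hb : 0 < b)
    (hda : IsDensityPoint A a) (hdb : IsDensityPoint B b) :
    ∃ (q : ℕ → ℚ) (as bs : ℕ → ℝ),
      (∀ n, 0 < q n) ∧ (∀ n, as n ∈ A) ∧ (∀ n, bs n ∈ B) ∧
      Tendsto as atTop (𝓝 a) ∧ Tendsto bs atTop (𝓝 b) ∧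
      ∀ n, bs n = (q n : ℝ) * as n := by
  have h : ∀ n : ℕ, ∃ q : ℚ, 0 < q ∧ ∃ x ∈ A, ∃ y ∈ B,
      |x - a| < 1 / (n + 1) ∧ |y - b| < 1 / (n + 1) ∧ y = (q : ℝ) * x :=
    fun n => key A B hA hB a b ha hb hda hdb (1 / (n + 1)) (by positivity)
  choose q hq x hxA y hyB hx hy hxy using h
  have hlim : Tendsto (fun n : ℕ => 1 / ((n : ℝ) + 1)) atTop (𝓝 0) :=
    tendsto_one_div_add_atTop_nhds_zero_nat
  refine ⟨q, x, y, hq, hxA, hyB, ?_, ?_, hxy⟩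
  · rw [tendsto_iff_dist_tendsto_zero]
    exact squeeze_zero (fun n => dist_nonneg)
      (fun n => by rw [Real.dist_eq]; exact le_of_lt (hx n)) hlim
  · rw [tendsto_iff_dist_tendsto_zero]
    exact squeeze_zero (fun n => dist_nonneg)
      (fun n => by rw [Real.dist_eq]; exact le_of_lt (hy n)) hlim
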